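/- Let (L,Q) be a unimodular lattice of signature (1,N) with 2 ≤ N ≤ 8, and fix a basis identifying (L,Q) with ⟨1⟩ ⊕ N⟨−1⟩. Then for any primitive isotropic vector w ∈ L there exists f ∈ O(L,Q) with f(w) = v, where v = H − E₁ in the standard orthogonal basis {H, E₁, …, E_N} (Q(H,H)=1, Q(Eᵢ,Eᵢ)=−1). In other words, O(L,Q) acts transitively on primitive isotropic vectors. -/

import Mathlib

/-- The standard bilinear form of signature `(1, N)` on `ℤ^{N+1}`,
i.e. the intersection form `⟨1⟩ ⊕ N⟨−1⟩` in the basis `{H, E₁, …, E_N}`. -/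
def QZ (N : ℕ) (x y : Fin (N + 1) → ℤ) : ℤ :=
  x 0 * y 0 - ∑ i : Fin N, x i.succ * y i.succ

namespace Stmt9

variable {N : ℕ}

lemma QZ_symm (x y : Fin (N+1) → ℤ) : QZ N x y = QZ N y x := by
  unfold QZ
  congr 1
  · ring
  · exact Finset.sum_congr rfl (fun i _ => mul_comm _ _)

lemma QZ_add_left (x x' y : Fin (N+1) → ℤ) :
    QZ N (x + x') y = QZ N x y + QZ N x' y := by
  unfold QZ
  simp only [Pi.add_apply, add_mul, Finset.sum_add_distrib]
  ring

lemma QZ_smul_left (c : ℤ) (x y : Fin (N+1) → ℤ) :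
    QZ N (c • x) y = c * QZ N x y := by
  unfold QZ
  simp only [Pi.smul_apply, smul_eq_mul, mul_assoc, ← Finset.mul_sum]
  ring

lemma QZ_sub_left (x x' y : Fin (N+1) → ℤ) :
    QZ N (x - x') y = QZ N x y - QZ N x' y := by
  have h := QZ_add_left x (-x') y
  have h2 := QZ_smul_left (-1) x' y
  simp only [neg_one_smul] at h2
  rw [sub_eq_add_neg, h, h2]; ring

lemma QZ_sub_right (x y y' : Fin (N+1) → ℤ) :
    QZ N x (y - y') = QZ N x y - QZ N x y' := by
  rw [QZ_symm, QZ_sub_left, QZ_symm y x, QZ_symm y' x]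

lemma QZ_smul_right (c : ℤ) (x y : Fin (N+1) → ℤ) :
    QZ N x (c • y) = c * QZ N x y := by
  rw [QZ_symm, QZ_smul_left, QZ_symm]

def sgnIso (ε : Fin (N+1) → ℤ) (hε : ∀ i, ε i * ε i = 1) :
    (Fin (N+1) → ℤ) ≃ₗ[ℤ] (Fin (N+1) → ℤ) where
  toFun x := fun i => ε i * x i
  invFun x := fun i => ε i * x i
  left_inv x := by funext i; show ε i * (ε i * x i) = x i; rw [← mul_assoc, hε i, one_mul]
  right_inv x := by funext i; show ε i * (ε i * x i) = x i; rw [← mul_assoc, hε i, one_mul]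
  map_add' x y := by funext i; simp [mul_add]
  map_smul' c x := by funext i; simp; ring

lemma sgnIso_pres (ε : Fin (N+1) → ℤ) (hε : ∀ i, ε i * ε i = 1) (x y : Fin (N+1) → ℤ) :
    QZ N (sgnIso ε hε x) (sgnIso ε hε y) = QZ N x y := by
  unfold QZ sgnIso
  simp only [LinearEquiv.coe_mk, Equiv.coe_fn_mk, LinearMap.coe_mk, AddHom.coe_mk]
  congr 1
  · linear_combination (x 0 * y 0) * hε 0
  · refine Finset.sum_congr rfl (fun i _ => ?_)
    linear_combination (x i.succ * y i.succ) * hε i.succ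

def extPerm (σ : Equiv.Perm (Fin N)) : Equiv.Perm (Fin (N+1)) where
  toFun i := Fin.cases 0 (fun j => (σ j).succ) i
  invFun i := Fin.cases 0 (fun j => (σ.symm j).succ) i
  left_inv i := by cases i using Fin.cases <;> simp
  right_inv i := by cases i using Fin.cases <;> simp

def permIso (σ : Equiv.Perm (Fin N)) :
    (Fin (N+1) → ℤ) ≃ₗ[ℤ] (Fin (N+1) → ℤ) where
  toFun x := x ∘ (extPerm σ)
  invFun x := x ∘ (extPerm σ).symm
  left_inv x := by funext i; simp
  right_inv x := by funext i; simp
  map_add' x y := rfl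
  map_smul' c x := rfl

@[simp] lemma extPerm_zero (σ : Equiv.Perm (Fin N)) : extPerm σ 0 = 0 := rfl

@[simp] lemma extPerm_succ (σ : Equiv.Perm (Fin N)) (j : Fin N) :
    extPerm σ j.succ = (σ j).succ := by
  simp [extPerm]

lemma permIso_apply_zero (σ : Equiv.Perm (Fin N)) (x : Fin (N+1) → ℤ) :
    permIso σ x 0 = x 0 := rfl

lemma permIso_apply_succ (σ : Equiv.Perm (Fin N)) (x : Fin (N+1) → ℤ) (j : Fin N) :
    permIso σ x j.succ = x (σ j).succ := by
  show x (extPerm σ j.succ) = _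
  rw [extPerm_succ]

lemma permIso_pres (σ : Equiv.Perm (Fin N)) (x y : Fin (N+1) → ℤ) :
    QZ N (permIso σ x) (permIso σ y) = QZ N x y := by
  unfold QZ
  rw [permIso_apply_zero, permIso_apply_zero]
  congr 1
  calc ∑ i : Fin N, permIso σ x i.succ * permIso σ y i.succ
      = ∑ i : Fin N, x (σ i).succ * y (σ i).succ := by
        refine Finset.sum_congr rfl (fun i _ => ?_)
        rw [permIso_apply_succ, permIso_apply_succ]
    _ = ∑ i : Fin N, x i.succ * y i.succ :=
        Equiv.sum_comp σ (fun i => x i.succ * y i.succ)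

def reflIso (s : ℤ) (r : Fin (N+1) → ℤ) (hs : s * s = 1) (hr : QZ N r r = 2 * s) :
    (Fin (N+1) → ℤ) ≃ₗ[ℤ] (Fin (N+1) → ℤ) where
  toFun x := x - (s * QZ N x r) • r
  invFun x := x - (s * QZ N x r) • r
  left_inv x := by
    simp only [QZ_sub_left, QZ_smul_left, hr]
    have h2 : s * (QZ N x r - s * QZ N x r * (2 * s)) = -(s * QZ N x r) := by
      linear_combination (-2 * QZ N x r * s) * hs
    rw [h2]
    simp only [neg_smul, sub_neg_eq_add]
    abel
  right_inv x := by
    simp only [QZ_sub_left, QZ_smul_left, hr]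
    have h2 : s * (QZ N x r - s * QZ N x r * (2 * s)) = -(s * QZ N x r) := by
      linear_combination (-2 * QZ N x r * s) * hs
    rw [h2]
    simp only [neg_smul, sub_neg_eq_add]
    abel
  map_add' x y := by
    simp only [QZ_add_left, mul_add, add_smul]
    abel
  map_smul' c x := by
    simp only [QZ_smul_left, RingHom.id_apply, smul_smul]
    rw [mul_left_comm]
    module

lemma reflIso_pres (s : ℤ) (r : Fin (N+1) → ℤ) (hs : s * s = 1) (hr : QZ N r r = 2 * s)
    (x y : Fin (N+1) → ℤ) :
    QZ N (reflIso s r hs hr x) (reflIso s r hs hr y) = QZ N x y := by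
  show QZ N (x - (s * QZ N x r) • r) (y - (s * QZ N y r) • r) = QZ N x y
  rw [QZ_sub_left, QZ_sub_right, QZ_sub_right, QZ_smul_left, QZ_smul_right,
    QZ_smul_right, QZ_smul_left, hr, QZ_symm r y]
  linear_combination (2 * s * QZ N x r * QZ N y r) * hs


def vT (N : ℕ) : Fin (N+1) → ℤ := fun i => if i = 0 then 1 else if i = 1 then -1 else 0

def Good (N : ℕ) (w : Fin (N+1) → ℤ) : Prop :=
  ∃ f : (Fin (N+1) → ℤ) ≃ₗ[ℤ] (Fin (N+1) → ℤ),
    (∀ x y, QZ N (f x) (f y) = QZ N x y) ∧ f w = vT N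

lemma good_comp (f : (Fin (N+1) → ℤ) ≃ₗ[ℤ] (Fin (N+1) → ℤ))
    (hf : ∀ x y, QZ N (f x) (f y) = QZ N x y) (w : Fin (N+1) → ℤ)
    (h : Good N (f w)) : Good N w := by
  obtain ⟨g, hg, hgw⟩ := h
  exact ⟨f.trans g, fun x y => by
      rw [LinearEquiv.trans_apply, LinearEquiv.trans_apply, hg, hf],
    by rw [LinearEquiv.trans_apply, hgw]⟩

lemma prim_map (f : (Fin (N+1) → ℤ) ≃ₗ[ℤ] (Fin (N+1) → ℤ)) (w : Fin (N+1) → ℤ)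
    (h : ∀ (a : ℤ) (x : Fin (N+1) → ℤ), a • x = w → IsUnit a) :
    ∀ (a : ℤ) (x : Fin (N+1) → ℤ), a • x = f w → IsUnit a := by
  intro a x hax
  refine h a (f.symm x) ?_
  have h2 : f.symm (a • x) = a • f.symm x := f.symm.map_smul a x
  rw [← h2, hax, LinearEquiv.symm_apply_apply]

lemma normalize (w : Fin (N+1) → ℤ) :
    ∃ f : (Fin (N+1) → ℤ) ≃ₗ[ℤ] (Fin (N+1) → ℤ),
      (∀ x y, QZ N (f x) (f y) = QZ N x y) ∧ (f w) 0 = |w 0| ∧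
      (∀ j : Fin N, 0 ≤ f w j.succ) ∧
      (∀ j k : Fin N, j ≤ k → f w k.succ ≤ f w j.succ) := by
  classical
  set ε : Fin (N+1) → ℤ := fun i => if 0 ≤ w i then 1 else -1 with hεdef
  have hε : ∀ i, ε i * ε i = 1 := fun i => by
    by_cases h : 0 ≤ w i <;> simp [hεdef, h]
  have hw1 : ∀ i, sgnIso ε hε w i = |w i| := by
    intro i
    show ε i * w i = |w i|
    by_cases h : 0 ≤ w i
    · simp [hεdef, h, abs_of_nonneg h]
    · simp [hεdef, h, abs_of_neg (lt_of_not_ge h)]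
  set σ := Tuple.sort (fun j : Fin N => -(sgnIso ε hε w j.succ)) with hσdef
  have hmono := Tuple.monotone_sort (fun j : Fin N => -(sgnIso ε hε w j.succ))
  refine ⟨(sgnIso ε hε).trans (permIso σ), ?_, ?_, ?_, ?_⟩
  · intro x y
    rw [LinearEquiv.trans_apply, LinearEquiv.trans_apply, permIso_pres, sgnIso_pres]
  · rw [LinearEquiv.trans_apply]
    rw [permIso_apply_zero]
    exact hw1 0
  · intro j
    rw [LinearEquiv.trans_apply, permIso_apply_succ, hw1]
    exact abs_nonneg _
  · intro j k hjk
    rw [LinearEquiv.trans_apply, permIso_apply_succ, permIso_apply_succ]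
    have := hmono hjk
    simpa using this

lemma sum_ite_lt3 (h3 : 3 ≤ N) (h : Fin N → ℤ) :
    ∑ j : Fin N, h j * (if (j : ℕ) < 3 then 1 else 0)
      = h ⟨0, by omega⟩ + h ⟨1, by omega⟩ + h ⟨2, by omega⟩ := by
  classical
  have h1 : (fun j : Fin N => h j * (if (j : ℕ) < 3 then (1:ℤ) else 0))
      = fun j : Fin N => if (j : ℕ) < 3 then h j else 0 := by
    funext j; split <;> simp
  rw [h1, ← Finset.sum_filter]
  have h2 : Finset.univ.filter (fun j : Fin N => (j : ℕ) < 3)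
      = {⟨0, by omega⟩, ⟨1, by omega⟩, ⟨2, by omega⟩} := by
    ext j
    simp [Fin.ext_iff]
    omega
  rw [h2]
  rw [Finset.sum_insert (by simp [Fin.ext_iff]), Finset.sum_insert (by simp [Fin.ext_iff]),
    Finset.sum_singleton]
  ring


lemma arith3 (hN8 : N ≤ 8) (g : Fin N → ℤ)
    (j0 j1 j2 : Fin N) (hj0 : (j0 : ℕ) = 0) (hj1 : (j1 : ℕ) = 1) (hj2 : (j2 : ℕ) = 2)
    (hpos : ∀ j, 0 ≤ g j) (hanti : ∀ j k : Fin N, j ≤ k → g k ≤ g j)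
    (u0 : ℤ) (hsq : u0 * u0 = ∑ j, g j * g j) (h2 : 2 ≤ u0) :
    (u0 < g j0 + g j1 + g j2 ∧ g j0 + g j1 + g j2 < 3 * u0) ∨
      (g j0 = u0 ∧ ∀ j, j ≠ j0 → g j = 0) := by
  classical
  have hj01 : j0 ≠ j1 := by intro h; rw [h] at hj0; omega
  have h0le1 : j0 ≤ j1 := by rw [Fin.le_def]; omega
  have h1le2 : j1 ≤ j2 := by rw [Fin.le_def]; omega
  have h0le2 : j0 ≤ j2 := by rw [Fin.le_def]; omega
  have hle : ∀ j : Fin N, g j ≤ u0 := by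
    intro j
    have hj : g j * g j ≤ ∑ i, g i * g i :=
      Finset.single_le_sum (f := fun i => g i * g i)
        (fun i _ => mul_self_nonneg (g i)) (Finset.mem_univ j)
    nlinarith [hpos j]
  have hpair : g j0 * g j0 + g j1 * g j1 ≤ ∑ j, g j * g j := by
    have hsub : ({j0, j1} : Finset (Fin N)) ⊆ Finset.univ := Finset.subset_univ _
    have := Finset.sum_le_sum_of_subset_of_nonneg hsub
      (fun i _ _ => mul_self_nonneg (g i))
    rwa [Finset.sum_pair hj01] at this
  have hupper : g j0 + g j1 + g j2 < 3 * u0 := by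
    by_contra hc
    push_neg at hc
    have e0 : g j0 = u0 := le_antisymm (hle j0) (by linarith [hle j1, hle j2])
    have e1 : g j1 = u0 := le_antisymm (hle j1) (by linarith [hle j0, hle j2])
    rw [e0, e1, ← hsq] at hpair
    nlinarith
  by_cases hlow : u0 < g j0 + g j1 + g j2
  · exact Or.inl ⟨hlow, hupper⟩
  push_neg at hlow
  -- degenerate analysis
  right
  have hbd : ∀ j : Fin N,
      g j * g j ≤ (if j = j0 then g j0 * g j0 else if j = j1 then g j1 * g j1
        else g j2 * g j2) := by
    intro j
    by_cases e0 : j = j0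
    · simp [e0]
    by_cases e1 : j = j1
    · simp [e1, Ne.symm hj01]
    simp only [e0, e1, if_false]
    have hjv : j2 ≤ j := by
      rw [Fin.le_def]
      have v0 : (j : ℕ) ≠ 0 := fun h => e0 (Fin.ext (by omega))
      have v1 : (j : ℕ) ≠ 1 := fun h => e1 (Fin.ext (by omega))
      omega
    exact mul_self_le_mul_self (hpos j) (hanti j2 j hjv)
  have hsplit : ∀ j : Fin N,
      (if j = j0 then g j0 * g j0 else if j = j1 then g j1 * g j1 else g j2 * g j2)
        = g j2 * g j2 + (if j = j0 then g j0 * g j0 - g j2 * g j2 else 0)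
          + (if j = j1 then g j1 * g j1 - g j2 * g j2 else 0) := by
    intro j
    by_cases e0 : j = j0
    · simp [e0, hj01]
      try ring
    by_cases e1 : j = j1
    · simp [e1, Ne.symm hj01]
      try ring
    simp [e0, e1]
  have hsumbd : u0 * u0 ≤ g j0 * g j0 + g j1 * g j1 + ((N : ℤ) - 2) * (g j2 * g j2) := by
    calc u0 * u0 = ∑ j, g j * g j := hsq
      _ ≤ ∑ j : Fin N, (if j = j0 then g j0 * g j0 else if j = j1 then g j1 * g j1
            else g j2 * g j2) := Finset.sum_le_sum (fun j _ => hbd j)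
      _ = ∑ j : Fin N, (g j2 * g j2 + (if j = j0 then g j0 * g j0 - g j2 * g j2 else 0)
            + (if j = j1 then g j1 * g j1 - g j2 * g j2 else 0)) :=
          Finset.sum_congr rfl (fun j _ => hsplit j)
      _ = g j0 * g j0 + g j1 * g j1 + ((N : ℤ) - 2) * (g j2 * g j2) := by
          rw [Finset.sum_add_distrib, Finset.sum_add_distrib,
            Finset.sum_ite_eq' Finset.univ j0, Finset.sum_ite_eq' Finset.univ j1,
            Finset.sum_const, Finset.card_univ, Fintype.card_fin]
          simp only [Finset.mem_univ, if_true, nsmul_eq_mul]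
          ring
  have hNle : (N : ℤ) ≤ 8 := by exact_mod_cast hN8
  have hg2sq : 0 ≤ g j2 * g j2 := mul_self_nonneg _
  have hub6 : u0 * u0 ≤ g j0 * g j0 + g j1 * g j1 + 6 * (g j2 * g j2) := by nlinarith
  have ht0 : 0 ≤ g j0 + g j1 + g j2 := by
    have := hpos j0; have := hpos j1; have := hpos j2; linarith
  have htsq : (g j0 + g j1 + g j2) * (g j0 + g j1 + g j2) ≤ u0 * u0 :=
    mul_self_le_mul_self ht0 hlow
  have h01 : g j1 ≤ g j0 := hanti j0 j1 h0le1
  have h12 : g j2 ≤ g j1 := hanti j1 j2 h1le2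
  have hg2 : g j2 = 0 := by
    have hg2le : g j2 ≤ 0 := by
      nlinarith [mul_nonneg (sub_nonneg.2 (le_trans h12 h01)) (hpos j2),
        mul_nonneg (sub_nonneg.2 h12) (hpos j2),
        mul_nonneg (sub_nonneg.2 (le_trans h12 h01)) (sub_nonneg.2 h12),
        mul_nonneg (hpos j2) (hpos j2)]
    exact le_antisymm hg2le (hpos j2)
  have hzero2 : ∀ j : Fin N, j ≠ j0 → j ≠ j1 → g j = 0 := by
    intro j e0 e1
    have hjv : j2 ≤ j := by
      rw [Fin.le_def]
      have v0 : (j : ℕ) ≠ 0 := fun h => e0 (Fin.ext (by omega))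
      have v1 : (j : ℕ) ≠ 1 := fun h => e1 (Fin.ext (by omega))
      omega
    exact le_antisymm (by rw [← hg2]; exact hanti j2 j hjv) (hpos j)
  have hsum01 : u0 * u0 = g j0 * g j0 + g j1 * g j1 := by
    have hss : ∑ j ∈ ({j0, j1} : Finset (Fin N)), g j * g j = ∑ j, g j * g j := by
      apply Finset.sum_subset (Finset.subset_univ _)
      intro j _ hj
      simp only [Finset.mem_insert, Finset.mem_singleton] at hj
      push_neg at hj
      rw [hzero2 j hj.1 hj.2]
      ring
    rw [Finset.sum_pair hj01] at hss
    rw [hsq, ← hss]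
  have hg1 : g j1 = 0 := by
    have hmul : g j0 * g j1 ≤ 0 := by nlinarith [hg2]
    have hmul' : 0 ≤ g j0 * g j1 := mul_nonneg (hpos j0) (hpos j1)
    have : g j0 * g j1 = 0 := le_antisymm hmul hmul'
    rcases mul_eq_zero.1 this with h | h
    · exfalso
      have : g j1 = 0 := le_antisymm (h ▸ h01) (hpos j1)
      rw [h, this] at hsum01
      nlinarith
    · exact h
  have hg0 : g j0 = u0 := by
    rw [hg1] at hsum01
    have hfac : (u0 - g j0) * (u0 + g j0) = 0 := by linear_combination hsum01
    rcases mul_eq_zero.1 hfac with h | h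
    · linarith
    · exfalso; linarith [hpos j0]
  refine ⟨hg0, fun j hj => ?_⟩
  by_cases e1 : j = j1
  · rw [e1]; exact hg1
  exact hzero2 j hj e1


lemma val_one_fin (hN : 1 ≤ N) : ((1 : Fin (N+1)) : ℕ) = 1 := by
  simp [Fin.val_one']
  omega

lemma finish_case (hN2 : 2 ≤ N) (u : Fin (N+1) → ℤ) (h0 : u 0 = 1)
    (hpos : ∀ j : Fin N, 0 ≤ u j.succ)
    (hanti : ∀ j k : Fin N, j ≤ k → u k.succ ≤ u j.succ)
    (hsq : u 0 * u 0 = ∑ j : Fin N, u j.succ * u j.succ) :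
    Good N u := by
  classical
  have hNpos : 0 < N := by omega
  set j0 : Fin N := ⟨0, hNpos⟩ with hj0def
  have hsum1 : ∑ j : Fin N, u j.succ * u j.succ = 1 := by rw [← hsq, h0]; ring
  have hg0pos : 1 ≤ u j0.succ := by
    by_contra hc
    push_neg at hc
    have hg00 : u j0.succ = 0 := le_antisymm (by omega) (hpos j0)
    have hz : ∀ j : Fin N, u j.succ = 0 := fun j =>
      le_antisymm (hg00 ▸ hanti j0 j (by rw [Fin.le_def]; exact Nat.zero_le _)) (hpos j)
    have : (1:ℤ) = 0 := by
      rw [← hsum1, Finset.sum_eq_zero (fun j _ => by rw [hz j]; ring)]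
    exact absurd this one_ne_zero
  have hg0le : u j0.succ * u j0.succ ≤ 1 := by
    rw [← hsum1]
    exact Finset.single_le_sum (f := fun j : Fin N => u j.succ * u j.succ)
      (fun i _ => mul_self_nonneg _) (Finset.mem_univ j0)
  have hg0 : u j0.succ = 1 := by nlinarith
  have hrest : ∀ j : Fin N, j ≠ j0 → u j.succ = 0 := by
    intro j hj
    have hh := Finset.sum_erase_add Finset.univ
      (fun j : Fin N => u j.succ * u j.succ) (Finset.mem_univ j0)
    rw [hsum1] at hh
    simp only [hg0, mul_one] at hh
    have herase : ∑ j ∈ Finset.univ.erase j0, u j.succ * u j.succ = 0 := by linarith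
    have := (Finset.sum_eq_zero_iff_of_nonneg
      (fun i _ => mul_self_nonneg (u i.succ))).1 herase j
      (Finset.mem_erase.2 ⟨hj, Finset.mem_univ j⟩)
    exact mul_self_eq_zero.1 this
  set ε : Fin (N+1) → ℤ := fun i => if (i : ℕ) = 1 then -1 else 1 with hεdef
  have hε : ∀ i, ε i * ε i = 1 := fun i => by
    by_cases h : (i : ℕ) = 1 <;> simp [hεdef, h]
  refine ⟨sgnIso ε hε, sgnIso_pres ε hε, ?_⟩
  funext i
  show ε i * u i = vT N i
  unfold vT
  cases i using Fin.cases with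
  | zero =>
    rw [if_pos rfl]
    have : ε 0 = 1 := by simp [hεdef]
    rw [this, h0]; ring
  | succ j =>
    rw [if_neg (Fin.succ_ne_zero j)]
    have c1 : (j.succ = (1 : Fin (N+1))) ↔ (j : ℕ) = 0 := by
      rw [Fin.ext_iff, Fin.val_succ, val_one_fin (by omega)]
      omega
    have hεsucc : ε j.succ = if (j : ℕ) = 0 then -1 else 1 := by
      rw [hεdef]
      simp only [Fin.val_succ]
      by_cases hj : (j : ℕ) = 0 <;> simp [hj]
    by_cases hj : (j : ℕ) = 0
    · have hjj : j = j0 := Fin.ext (by rw [hj])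
      rw [if_pos (c1.2 hj), hεsucc, if_pos hj, hjj, hg0]
      ring
    · have hjne : j ≠ j0 := fun h => hj (by rw [h])
      rw [if_neg (fun h => hj (c1.1 h)), hεsucc, if_neg hj, hrest j hjne]
      ring

lemma arith2 (u0 a b : ℤ) (ha : 0 ≤ a) (hb : 0 ≤ b) (hba : b ≤ a)
    (hsq : u0 * u0 = a * a + b * b) (h2 : 2 ≤ u0) :
    (u0 < a + b ∧ a + b < 2 * u0) ∨ (a = u0 ∧ b = 0) := by
  have hupper : a + b < 2 * u0 := by
    nlinarith [sq_nonneg (a - b), sq_nonneg (a + b), sq_nonneg (a + b - 2 * u0)]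
  by_cases hlow : u0 < a + b
  · exact Or.inl ⟨hlow, hupper⟩
  push_neg at hlow
  right
  have htsq : (a + b) * (a + b) ≤ u0 * u0 := mul_self_le_mul_self (by linarith) hlow
  have hab : a * b = 0 := le_antisymm (by nlinarith) (mul_nonneg ha hb)
  rcases mul_eq_zero.1 hab with h | h
  · exfalso
    have hb0 : b = 0 := le_antisymm (h ▸ hba) hb
    rw [h, hb0] at hsq
    nlinarith
  · have hfac : (u0 - a) * (u0 + a) = 0 := by rw [h] at hsq; linear_combination hsq
    rcases mul_eq_zero.1 hfac with h' | h'
    · exact ⟨by linarith, h⟩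
    · exfalso; linarith


lemma key (hN2 : 2 ≤ N) (hN8 : N ≤ 8) :
    ∀ n : ℕ, ∀ w : Fin (N+1) → ℤ, (w 0).natAbs ≤ n → QZ N w w = 0 →
      (∀ (a : ℤ) (x : Fin (N+1) → ℤ), a • x = w → IsUnit a) → Good N w := by
  intro n
  induction n using Nat.strong_induction_on with
  | _ n IH =>
  intro w hn hwiso hprim
  classical
  have hsq : w 0 * w 0 = ∑ j : Fin N, w j.succ * w j.succ := by
    unfold QZ at hwiso; linarith
  have hw0 : w 0 ≠ 0 := by
    intro h0
    have hsum0 : ∑ j : Fin N, w j.succ * w j.succ = 0 := by rw [← hsq, h0]; ring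
    have hz : ∀ j : Fin N, w j.succ = 0 := fun j => mul_self_eq_zero.1
      ((Finset.sum_eq_zero_iff_of_nonneg
        (fun i _ => mul_self_nonneg (w i.succ))).1 hsum0 j (Finset.mem_univ j))
    have hwz : w = 0 := by
      funext i
      cases i using Fin.cases with
      | zero => exact h0
      | succ j => exact hz j
    have := hprim 0 0 (by rw [smul_zero, hwz])
    simp at this
  obtain ⟨f1, hf1p, hf10, hf1pos, hf1anti⟩ := normalize w
  set u := f1 w with hudef
  have huiso : QZ N u u = 0 := by rw [hf1p]; exact hwiso
  have huprim := prim_map f1 w hprim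
  have husq : u 0 * u 0 = ∑ j : Fin N, u j.succ * u j.succ := by
    have h := huiso
    unfold QZ at h; linarith
  have hu0pos : 1 ≤ u 0 := by
    rw [hf10]
    have := abs_pos.2 hw0
    omega
  apply good_comp f1 hf1p w
  rw [← hudef]
  by_cases h1 : u 0 = 1
  · exact finish_case hN2 u h1 hf1pos hf1anti husq
  have h2 : 2 ≤ u 0 := by omega
  have hnAbs : (u 0).natAbs ≤ n := by rw [hf10, Int.natAbs_abs]; exact hn
  rcases Nat.lt_or_ge N 3 with hN3 | hN3
  · -- N = 2
    have hN : N = 2 := by omega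
    subst hN
    set a := u (0 : Fin 2).succ with hadef
    set b := u (1 : Fin 2).succ with hbdef
    have husq2 : u 0 * u 0 = a * a + b * b := by
      rw [husq, Fin.sum_univ_two]
    have hba : b ≤ a := hf1anti 0 1 (by decide)
    rcases arith2 (u 0) a b (hf1pos 0) (hf1pos 1) hba husq2 h2 with
      ⟨hlow, hupp⟩ | ⟨hdeg0, hdeg1⟩
    · -- reflection step
      set r2 : Fin 3 → ℤ := ![2, 1, 1] with hr2def
      have hQrr2 : QZ 2 r2 r2 = 2 * 1 := by decide
      have hQur2 : QZ 2 u r2 = 2 * u 0 - (a + b) := by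
        unfold QZ
        rw [Fin.sum_univ_two]
        have e0 : r2 0 = 2 := rfl
        have e1 : r2 (0 : Fin 2).succ = 1 := rfl
        have e2 : r2 (1 : Fin 2).succ = 1 := rfl
        rw [e0, e1, e2, ← hadef, ← hbdef]
        ring
      set f3 := reflIso 1 r2 (by norm_num) hQrr2 with hf3def
      have hval : f3 u 0 = u 0 - QZ 2 u r2 * 2 := by
        show (u - ((1 : ℤ) * QZ 2 u r2) • r2) 0 = _
        simp only [Pi.sub_apply, Pi.smul_apply, smul_eq_mul]
        have e0 : r2 0 = 2 := rfl
        rw [e0]; ring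
      apply good_comp f3 (reflIso_pres 1 r2 (by norm_num) hQrr2) u
      apply IH ((f3 u) 0).natAbs ?_ (f3 u) le_rfl ?_ ?_
      · rw [hval, hQur2]
        omega
      · rw [reflIso_pres]; exact huiso
      · exact prim_map f3 u huprim
    · -- degenerate, contradiction with primitivity
      exfalso
      have hue : u = (u 0) • (fun i : Fin 3 => if (i : ℕ) ≤ 1 then 1 else 0) := by
        funext i
        simp only [Pi.smul_apply, smul_eq_mul]
        cases i using Fin.cases with
        | zero => norm_num
        | succ j =>
          fin_cases j
          · show a = u 0 * (if ((0 : Fin 2).succ : ℕ) ≤ 1 then 1 else 0)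
            rw [hdeg0]; norm_num
          · show b = u 0 * (if ((1 : Fin 2).succ : ℕ) ≤ 1 then 1 else 0)
            rw [hdeg1]; norm_num
      have := huprim (u 0) _ hue.symm
      rw [Int.isUnit_iff] at this
      omega
  · -- 3 ≤ N
    have hNpos0 : 0 < N := by omega
    have hNpos1 : 1 < N := by omega
    have hNpos2 : 2 < N := by omega
    set j0 : Fin N := ⟨0, hNpos0⟩ with hj0def
    set j1 : Fin N := ⟨1, hNpos1⟩ with hj1def
    set j2 : Fin N := ⟨2, hNpos2⟩ with hj2def
    set r : Fin (N+1) → ℤ := Fin.cons 1 (fun j : Fin N => if (j : ℕ) < 3 then 1 else 0)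
      with hrdef
    have hr0 : r 0 = 1 := rfl
    have hrsucc : ∀ j : Fin N, r j.succ = if (j : ℕ) < 3 then 1 else 0 := fun j => by
      rw [hrdef, Fin.cons_succ]
    have hQrr : QZ N r r = 2 * (-1) := by
      unfold QZ
      rw [hr0]
      have e : ∑ i : Fin N, r i.succ * r i.succ
          = ∑ i : Fin N, (fun j : Fin N => if (j : ℕ) < 3 then (1:ℤ) else 0) i
              * (if (i : ℕ) < 3 then 1 else 0) :=
        Finset.sum_congr rfl (fun i _ => by rw [hrsucc i])
      rw [e, sum_ite_lt3 hN3]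
      norm_num
    have hQur : QZ N u r = u 0 - (u j0.succ + u j1.succ + u j2.succ) := by
      unfold QZ
      rw [hr0, mul_one]
      have e : ∑ i : Fin N, u i.succ * r i.succ
          = ∑ i : Fin N, (fun j : Fin N => u j.succ) i * (if (i : ℕ) < 3 then 1 else 0) :=
        Finset.sum_congr rfl (fun i _ => by rw [hrsucc i])
      rw [e, sum_ite_lt3 hN3]
    rcases arith3 hN8 (fun j : Fin N => u j.succ) j0 j1 j2 rfl rfl rfl
        hf1pos hf1anti (u 0) husq h2 with ⟨hlow, hupp⟩ | ⟨hdeg0, hdegz⟩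
    · set f3 := reflIso (-1) r (by norm_num) hQrr with hf3def
      have hval : f3 u 0 = u 0 + QZ N u r := by
        show (u - ((-1 : ℤ) * QZ N u r) • r) 0 = _
        simp only [Pi.sub_apply, Pi.smul_apply, smul_eq_mul]
        rw [hr0]; ring
      apply good_comp f3 (reflIso_pres (-1) r (by norm_num) hQrr) u
      apply IH ((f3 u) 0).natAbs ?_ (f3 u) le_rfl ?_ ?_
      · rw [hval, hQur]
        omega
      · rw [reflIso_pres]; exact huiso
      · exact prim_map f3 u huprim
    · exfalso
      have hue : u = (u 0) • (fun i : Fin (N+1) => if (i : ℕ) ≤ 1 then 1 else 0) := by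
        funext i
        simp only [Pi.smul_apply, smul_eq_mul]
        cases i using Fin.cases with
        | zero => norm_num
        | succ j =>
          rw [Fin.val_succ]
          by_cases hj : (j : ℕ) = 0
          · have hjj : j = j0 := Fin.ext (by rw [hj])
            rw [hjj, hdeg0, if_pos (by omega)]
            ring
          · have hjne : j ≠ j0 := fun h => hj (by rw [h])
            rw [hdegz j hjne, if_neg (by omega)]
            ring
      have := huprim (u 0) _ hue.symm
      rw [Int.isUnit_iff] at this
      omega

end Stmt9

/-- For `2 ≤ N ≤ 8`, `O(L,Q)` acts transitively on primitive isotropic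
vectors of `⟨1⟩ ⊕ N⟨−1⟩`: every primitive isotropic `w` is mapped by some isometry
to `v = H − E₁ = (1, -1, 0, …, 0)`. -/
theorem stmt_9 (N : ℕ) (hN2 : 2 ≤ N) (hN8 : N ≤ 8)
    (w : Fin (N + 1) → ℤ) (hwiso : QZ N w w = 0)
    (hprim : ∀ (a : ℤ) (x : Fin (N + 1) → ℤ), a • x = w → IsUnit a) :
    ∃ f : (Fin (N + 1) → ℤ) ≃ₗ[ℤ] (Fin (N + 1) → ℤ),
      (∀ x y, QZ N (f x) (f y) = QZ N x y) ∧
      f w = (fun i : Fin (N + 1) =>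
        if i = 0 then 1 else if i = 1 then -1 else 0) := by
  obtain ⟨f, hf, hfw⟩ := Stmt9.key hN2 hN8 (w 0).natAbs w le_rfl hwiso hprim
  exact ⟨f, hf, hfw⟩
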